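/- Let X be a Hausdorff space such that the co-diagonal Δ^c_X = (X × X) \ Δ_X is discretely Lindelöf. Then the hereditary Lindelöf number of X is at most 𝔠 = 2^ℵ₀ (i.e. every open cover of every subspace of X has a subcover of cardinality at most 𝔠), and consequently |X| ≤ 2^𝔠. -/

import Mathlib

open Set Topology Cardinal Ordinal

universe u

/-- The co-diagonal of `X`: the complement of the diagonal in `X × X`. -/
def codiag (X : Type u) [TopologicalSpace X] : Set (X × X) := {p | p.1 ≠ p.2}

/-- A space is discretely Lindelöf if the closure of every discrete subset is
Lindelöf. -/
def DiscretelyLindelof (Z : Type u) [TopologicalSpace Z] : Prop :=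
  ∀ D : Set Z, DiscreteTopology D → IsLindelof (closure D)

def IsoSet {Z : Type*} [TopologicalSpace Z] (S : Set Z) : Prop :=
  ∀ z ∈ S, ∃ U, IsOpen U ∧ U ∩ S = {z}

lemma IsoSet.discrete {Z : Type*} [TopologicalSpace Z] {S : Set Z} (h : IsoSet S) :
    DiscreteTopology S := by
  rw [discreteTopology_iff_singleton_mem_nhds]
  rintro ⟨z, hz⟩
  obtain ⟨U, hU, hUS⟩ := h z hz
  have hzU : z ∈ U := by
    have : z ∈ U ∩ S := hUS ▸ rfl
    exact this.1
  have hmem : (Subtype.val ⁻¹' U : Set S) ∈ 𝓝 (⟨z, hz⟩ : S) :=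
    (continuous_subtype_val.continuousAt).preimage_mem_nhds (hU.mem_nhds hzU)
  refine Filter.mem_of_superset hmem ?_
  rintro ⟨w, hw⟩ hwU
  have : w ∈ U ∩ S := ⟨hwU, hw⟩
  rw [hUS] at this
  simpa using this

variable {X : Type u} [TopologicalSpace X] [T2Space X]

/-- key lemma A : closure of an isolated set has cardinality at most continuum. -/
lemma lemmaA (h : DiscretelyLindelof ↥(codiag X)) {D : Set X} (hD : IsoSet D) :
    #(closure D) ≤ Cardinal.continuum := by
  classical
  -- the off-diagonal pairs from D
  set D' : Set ↥(codiag X) := {p | (p : X × X).1 ∈ D ∧ (p : X × X).2 ∈ D} with hD'def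
  -- D' is isolated
  have hIso : IsoSet D' := by
    rintro ⟨⟨a, b⟩, hab⟩ ⟨ha, hb⟩
    obtain ⟨Ua, hUa, hUaD⟩ := hD a ha
    obtain ⟨Ub, hUb, hUbD⟩ := hD b hb
    refine ⟨Subtype.val ⁻¹' (Ua ×ˢ Ub), (hUa.prod hUb).preimage continuous_subtype_val, ?_⟩
    ext ⟨⟨c, d⟩, hcd⟩
    simp only [mem_inter_iff, mem_preimage, mem_prod, mem_setOf_eq, mem_singleton_iff,
      Subtype.mk.injEq, Prod.mk.injEq, hD'def]
    constructor
    · rintro ⟨⟨hc, hd⟩, hcD, hdD⟩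
      have h1 : c ∈ Ua ∩ D := ⟨hc, hcD⟩
      have h2 : d ∈ Ub ∩ D := ⟨hd, hdD⟩
      rw [hUaD] at h1; rw [hUbD] at h2
      exact ⟨h1, h2⟩
    · rintro ⟨hca, hdb⟩
      subst hca; subst hdb
      have h1 : c ∈ Ua ∩ D := by rw [hUaD]; rfl
      have h2 : d ∈ Ub ∩ D := by rw [hUbD]; rfl
      exact ⟨⟨h1.1, h2.1⟩, h1.2, h2.2⟩
  have hL : IsLindelof (closure D') := h D' hIso.discrete
  -- the set E of off-diagonal pairs from closure D
  set E : Set ↥(codiag X) := Subtype.val ⁻¹' ((closure D) ×ˢ (closure D)) with hEdef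
  have hEclosed : IsClosed E :=
    (isClosed_closure.prod isClosed_closure).preimage continuous_subtype_val
  have hEsub : E ⊆ closure D' := by
    rintro ⟨⟨a, b⟩, hab⟩ ⟨ha, hb⟩
    have hab' : a ≠ b := hab
    rw [IsEmbedding.subtypeVal.closure_eq_preimage_closure_image]
    simp only [mem_preimage]
    rw [mem_closure_iff]
    intro O hO hmemO
    rw [isOpen_prod_iff] at hO
    obtain ⟨U, V, hU, hV, haU, hbV, hUV⟩ := hO a b hmemO
    obtain ⟨U₀, V₀, hU₀, hV₀, haU₀, hbV₀, hdisj⟩ := t2_separation hab'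
    have ha1 : ∃ d₁ ∈ D, d₁ ∈ U ∩ U₀ := by
      have := (mem_closure_iff.1 ha) (U ∩ U₀) (hU.inter hU₀) ⟨haU, haU₀⟩
      obtain ⟨d, hd1, hd2⟩ := this
      exact ⟨d, hd2, hd1⟩
    have hb1 : ∃ d₂ ∈ D, d₂ ∈ V ∩ V₀ := by
      have := (mem_closure_iff.1 hb) (V ∩ V₀) (hV.inter hV₀) ⟨hbV, hbV₀⟩
      obtain ⟨d, hd1, hd2⟩ := this
      exact ⟨d, hd2, hd1⟩
    obtain ⟨d₁, hd₁D, hd₁U, hd₁U₀⟩ := ha1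
    obtain ⟨d₂, hd₂D, hd₂V, hd₂V₀⟩ := hb1
    have hne : d₁ ≠ d₂ := by
      intro hh; subst hh
      exact (hdisj.ne_of_mem hd₁U₀ hd₂V₀) rfl
    refine ⟨(d₁, d₂), ?_, ?_⟩
    · exact hUV ⟨hd₁U, hd₂V⟩
    · exact ⟨⟨(d₁, d₂), hne⟩, ⟨hd₁D, hd₂D⟩, rfl⟩
  have hELin : IsLindelof E := by
    have : IsLindelof (closure D' ∩ E) := hL.inter_right hEclosed
    rwa [inter_eq_self_of_subset_right hEsub] at this
  -- choose separating boxes for every point of the codiagonal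
  have sep : ∀ p : ↥(codiag X), ∃ U V : Set X, IsOpen U ∧ IsOpen V ∧
      (p : X × X).1 ∈ U ∧ (p : X × X).2 ∈ V ∧ Disjoint U V := by
    intro p
    obtain ⟨U, V, h1, h2, h3, h4, h5⟩ := t2_separation p.2
    exact ⟨U, V, h1, h2, h3, h4, h5⟩
  choose Up Vp hUp hVp hpU hpV hdisj using sep
  -- countable subcover of E by boxes
  obtain ⟨t, htc, htE, htcov⟩ := hELin.elim_nhds_subcover
    (fun p => Subtype.val ⁻¹' (Up p ×ˢ Vp p))
    (fun p _ => (continuous_subtype_val.continuousAt).preimage_mem_nhds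
      (((hUp p).prod (hVp p)).mem_nhds ⟨hpU p, hpV p⟩))
  -- injection from closure D into sets of t
  have hinj : Function.Injective (fun x : ↥(closure D) => {p : ↥t | (x : X) ∈ Up p.1}) := by
    intro x y hxy
    by_contra hne
    have hvalne : (x : X) ≠ (y : X) := fun hh => hne (Subtype.ext hh)
    have hmemE : (⟨((x : X), (y : X)), hvalne⟩ : ↥(codiag X)) ∈ E := ⟨x.2, y.2⟩
    have := htcov hmemE
    simp only [mem_iUnion] at this
    obtain ⟨p, hp, hmem⟩ := this
    have hxU : (x : X) ∈ Up p := hmem.1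
    have hyV : (y : X) ∈ Vp p := hmem.2
    have hyU : (y : X) ∉ Up p := fun hh => (hdisj p).ne_of_mem hh hyV rfl
    simp only [Set.ext_iff, mem_setOf_eq] at hxy
    exact hyU ((hxy ⟨p, hp⟩).1 hxU)
  calc #(closure D) ≤ #(Set ↥t) := Cardinal.mk_le_of_injective hinj
    _ = 2 ^ #↥t := Cardinal.mk_set
    _ ≤ 2 ^ ℵ₀ := by
        apply Cardinal.power_le_power_left (by norm_num)
        exact Cardinal.mk_le_aleph0_iff.2 htc.to_subtype
    _ = Cardinal.continuum := Cardinal.two_power_aleph0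


/-- index type of cardinality 𝔠⁺ -/
abbrev Iot : Type u := (Order.succ Cardinal.continuum.{u}).ord.ToType

lemma Iot_nonempty : Nonempty (Iot.{u}) := by
  rw [Ordinal.nonempty_toType_iff]
  intro h0
  have : (0 : Ordinal.{u}).card = 0 := by simp
  have h1 : (Order.succ Cardinal.continuum.{u}) = 0 := by
    have := congrArg Ordinal.card h0
    simpa [Cardinal.card_ord] using this
  have : (0:Cardinal.{u}) < Order.succ Cardinal.continuum.{u} :=
    lt_of_le_of_lt zero_le (Order.lt_succ _)
  simp [h1] at this

lemma Iot_mk : #(Iot.{u}) = Order.succ Cardinal.continuum.{u} := by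
  rw [Cardinal.mk_toType, Cardinal.card_ord]

lemma Iot_Iio_le (i : Iot.{u}) : #(Iio i) ≤ Cardinal.continuum.{u} := by
  have := Cardinal.mk_Iio_toType_ord_lt i
  exact Order.lt_succ_iff.1 this

lemma Iot_bounded {S : Set (Iot.{u})} (hS : #S ≤ Cardinal.continuum.{u}) :
    ∃ b : Iot.{u}, ∀ s ∈ S, s < b := by
  classical
  set c := Order.succ Cardinal.continuum.{u} with hc
  have hreg : c.IsRegular := Cardinal.isRegular_succ Cardinal.aleph0_le_continuum
  have hlim : Order.IsSuccLimit c.ord := Cardinal.isSuccLimit_ord hreg.aleph0_le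
  let f : S → Ordinal.{u} := fun s => (((Ordinal.ToType.mk (o := c.ord))).symm s.1).1
  have hf : ∀ s, f s < c.ord := fun s => (((Ordinal.ToType.mk (o := c.ord))).symm s.1).2
  have hS' : #S < c := lt_of_le_of_lt hS (Order.lt_succ _)
  have hsup : iSup f < c.ord := Cardinal.iSup_lt_ord_of_isRegular hreg hS' hf
  have hsup1 : Order.succ (iSup f) < c.ord := hlim.succ_lt hsup
  refine ⟨(Ordinal.ToType.mk (o := c.ord)) ⟨Order.succ (iSup f), hsup1⟩, ?_⟩
  intro s hs
  have hrepr : s = (Ordinal.ToType.mk (o := c.ord)) (((Ordinal.ToType.mk (o := c.ord))).symm s) := by simp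
  rw [hrepr, ((Ordinal.ToType.mk (o := c.ord))).lt_iff_lt]
  have h1 : f ⟨s, hs⟩ ≤ iSup f := Ordinal.le_iSup f ⟨s, hs⟩
  have h2 : (((Ordinal.ToType.mk (o := c.ord))).symm s).1 < Order.succ (iSup f) :=
    lt_of_le_of_lt h1 (Order.lt_succ _)
  rw [← Subtype.coe_lt_coe]; exact h2

lemma lemmaB (h : DiscretelyLindelof ↥(codiag X))
    (p : Iot.{u} → X) (O : Iot.{u} → Set X) (hO : ∀ i, IsOpen (O i))
    (hpO : ∀ i, p i ∈ O i) (hrs : ∀ i j, i < j → p j ∉ O i) : False := by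
  classical
  have hne : Nonempty (Iot.{u}) := Iot_nonempty
  have hpinj : Function.Injective p := by
    intro i j hij
    rcases lt_trichotomy i j with hlt | heq | hlt
    · exact absurd (hij ▸ hpO i) (hrs i j hlt)
    · exact heq
    · exact absurd (hij.symm ▸ hpO j) (hrs j i hlt)
  have wf : WellFounded ((· < ·) : Iot.{u} → Iot.{u} → Prop) := IsWellFounded.wf
  -- step function for the transfinite recursion
  set step : ∀ i : Iot.{u}, (∀ j, j < i → Iot.{u}) → Iot.{u} := fun i f =>
    if hex : ∃ k, (∀ j (hj : j < i), f j hj < k) ∧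
        p k ∉ closure (p '' {x | ∃ j, ∃ hj : j < i, f j hj = x})
    then Classical.choose hex else Classical.choice hne with hstep
  set e : Iot.{u} → Iot.{u} := wf.fix step with he
  have hefix : ∀ i, e i = step i (fun j _ => e j) := fun i => wf.fix_eq step i
  -- main invariant
  have key : ∀ i : Iot.{u}, (∀ j, j < i → e j < e i) ∧
      p (e i) ∉ closure (p '' (e '' Iio i)) := by
    intro i
    refine wf.induction (C := fun i => (∀ j, j < i → e j < e i) ∧
      p (e i) ∉ closure (p '' (e '' Iio i))) i ?_
    intro i IH
    -- the prefix is an isolated set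
    have hprefIso : IsoSet (p '' (e '' Iio i)) := by
      rintro z ⟨w, ⟨j, hj, rfl⟩, rfl⟩
      refine ⟨O (e j) \ closure (p '' (e '' Iio j)), (hO _).sdiff isClosed_closure, ?_⟩
      ext z'
      simp only [mem_inter_iff, mem_diff, mem_singleton_iff]
      constructor
      · rintro ⟨⟨hz1, hz2⟩, w', ⟨j', hj', rfl⟩, rfl⟩
        rcases lt_trichotomy j' j with hlt | heq | hlt
        · exact (hz2 (subset_closure ⟨e j', ⟨j', hlt, rfl⟩, rfl⟩)).elim
        · rw [heq]
        · exact ((hrs (e j) (e j') ((IH j' hj').1 j hlt)) hz1).elim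
      · rintro rfl
        exact ⟨⟨hpO _, (IH j hj).2⟩, e j, ⟨j, hj, rfl⟩, rfl⟩
    -- its closure is small
    have hclA : #(closure (p '' (e '' Iio i))) ≤ Cardinal.continuum := lemmaA h hprefIso
    -- a strict bound for the previous indices
    have hSsmall : #(e '' Iio i) ≤ Cardinal.continuum :=
      le_trans (Cardinal.mk_image_le) (Iot_Iio_le i)
    obtain ⟨b, hb⟩ := Iot_bounded hSsmall
    -- find an escaping index
    have hesc : ∃ k, b < k ∧ p k ∉ closure (p '' (e '' Iio i)) := by
      by_contra hcon
      push_neg at hcon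
      have hmap : ∀ k : ↥(Ioi b), p k.1 ∈ closure (p '' (e '' Iio i)) :=
        fun k => hcon k.1 k.2
      have hIoi : #(Ioi b) ≤ Cardinal.continuum := by
        have hinj2 : Function.Injective
            (fun k : ↥(Ioi b) => (⟨p k.1, hmap k⟩ : ↥(closure (p '' (e '' Iio i))))) := by
          intro k1 k2 hk
          have := congrArg Subtype.val hk
          exact Subtype.ext (hpinj this)
        exact le_trans (Cardinal.mk_le_of_injective hinj2) hclA
      have hIic : #(Iic b) ≤ Cardinal.continuum := by
        have hins : (Iic b : Set (Iot.{u})) = insert b (Iio b) := by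
          ext x
          simp [le_iff_lt_or_eq, or_comm]
        rw [hins]
        refine le_trans (Cardinal.mk_insert_le) ?_
        have h1 : #(Iio b) + 1 ≤ Cardinal.continuum + 1 :=
          add_le_add (Iot_Iio_le b) le_rfl
        refine le_trans h1 ?_
        rw [Cardinal.add_one_eq Cardinal.aleph0_le_continuum]
      have huniv : (univ : Set (Iot.{u})) = Iic b ∪ Ioi b := by
        ext x; simp [le_or_gt]
      have hbig : #(Iot.{u}) ≤ Cardinal.continuum := by
        have := Cardinal.mk_union_le (Iic b) (Ioi b)
        rw [← huniv, Cardinal.mk_univ] at this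
        refine le_trans this ?_
        refine le_trans (add_le_add hIic hIoi) ?_
        rw [Cardinal.add_eq_self Cardinal.aleph0_le_continuum]
      rw [Iot_mk] at hbig
      exact absurd hbig (not_le.2 (Order.lt_succ _))
    -- the recursion chose such a k
    obtain ⟨k, hk1, hk2⟩ := hesc
    have hsetEq : {x | ∃ j, ∃ hj : j < i, e j = x} = e '' Iio i := by
      ext x
      simp only [mem_setOf_eq, mem_image, mem_Iio]
      constructor
      · rintro ⟨j, hj, rfl⟩; exact ⟨j, hj, rfl⟩
      · rintro ⟨j, hj, rfl⟩; exact ⟨j, hj, rfl⟩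
    have hex : ∃ k', (∀ j (hj : j < i), e j < k') ∧
        p k' ∉ closure (p '' {x | ∃ j, ∃ hj : j < i, e j = x}) := by
      refine ⟨k, fun j hj => lt_trans (hb (e j) ⟨j, hj, rfl⟩) hk1, ?_⟩
      rw [hsetEq]; exact hk2
    have heieq : e i = Classical.choose hex := by
      rw [hefix i, hstep]
      simp only []
      rw [dif_pos hex]
    obtain ⟨hc1, hc2⟩ := Classical.choose_spec hex
    constructor
    · intro j hj
      rw [heieq]; exact hc1 j hj
    · rw [heieq, ← hsetEq]; exact hc2
  -- now derive the contradiction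
  have hmono : StrictMono e := fun i j hij => (key j).1 i hij
  have hIsoAll : IsoSet (range (p ∘ e)) := by
    rintro z ⟨j, rfl⟩
    refine ⟨O (e j) \ closure (p '' (e '' Iio j)), (hO _).sdiff isClosed_closure, ?_⟩
    ext z'
    simp only [mem_inter_iff, mem_diff, mem_singleton_iff, mem_range, Function.comp_apply]
    constructor
    · rintro ⟨⟨hz1, hz2⟩, j', rfl⟩
      rcases lt_trichotomy j' j with hlt | heq | hlt
      · exact (hz2 (subset_closure ⟨e j', ⟨j', hlt, rfl⟩, rfl⟩)).elim
      · rw [heq]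
      · exact ((hrs (e j) (e j') (hmono hlt)) hz1).elim
    · rintro rfl
      exact ⟨⟨hpO _, (key j).2⟩, j, rfl⟩
  have hcardA := lemmaA h hIsoAll
  have h1 : #(range (p ∘ e)) ≤ #(closure (range (p ∘ e))) :=
    Cardinal.mk_le_mk_of_subset subset_closure
  have h2 : #(range (p ∘ e)) = #(Iot.{u}) :=
    Cardinal.mk_range_eq _ (hpinj.comp hmono.injective)
  rw [h2, Iot_mk] at h1
  have : Order.succ Cardinal.continuum.{u} ≤ Cardinal.continuum.{u} := le_trans h1 hcardA
  exact absurd this (not_le.2 (Order.lt_succ _))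

lemma part1 (h : DiscretelyLindelof ↥(codiag X)) (Y : Set X) (𝒰 : Set (Set X))
    (hopen : ∀ U ∈ 𝒰, IsOpen U) (hcov : Y ⊆ ⋃₀ 𝒰) :
    ∃ 𝒱 ⊆ 𝒰, #↥𝒱 ≤ Cardinal.continuum ∧ Y ⊆ ⋃₀ 𝒱 := by
  classical
  by_contra hcon
  push_neg at hcon
  -- Y is nonempty (otherwise the empty subfamily works)
  have hYne : Y.Nonempty := by
    rcases Y.eq_empty_or_nonempty with hY | hY
    · exact absurd (by simp [hY]) (hcon ∅ (empty_subset _) (by simp))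
    · exact hY
  obtain ⟨y₀, hy₀⟩ := hYne
  have hjunk : Nonempty (X × Set X) := ⟨(y₀, ∅)⟩
  have wf : WellFounded ((· < ·) : Iot.{u} → Iot.{u} → Prop) := IsWellFounded.wf
  set step : ∀ i : Iot.{u}, (∀ j, j < i → X × Set X) → X × Set X := fun i f =>
    if hex : ∃ z : X × Set X, z.1 ∈ Y ∧ z.2 ∈ 𝒰 ∧ z.1 ∈ z.2 ∧
        (∀ j (hj : j < i), z.1 ∉ (f j hj).2)
    then Classical.choose hex else Classical.choice hjunk with hstep
  set q : Iot.{u} → X × Set X := wf.fix step with hq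
  have hqfix : ∀ i, q i = step i (fun j _ => q j) := fun i => wf.fix_eq step i
  have key : ∀ i : Iot.{u}, (q i).1 ∈ Y ∧ (q i).2 ∈ 𝒰 ∧ (q i).1 ∈ (q i).2 ∧
      ∀ j, j < i → (q i).1 ∉ (q j).2 := by
    intro i
    refine wf.induction (C := fun i => (q i).1 ∈ Y ∧ (q i).2 ∈ 𝒰 ∧ (q i).1 ∈ (q i).2 ∧
      ∀ j, j < i → (q i).1 ∉ (q j).2) i ?_
    intro i IH
    -- the previously chosen open sets form a small subfamily which cannot cover Y
    set 𝒱 : Set (Set X) := (fun j => (q j).2) '' Iio i with h𝒱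
    have h𝒱sub : 𝒱 ⊆ 𝒰 := by
      rintro V ⟨j, hj, rfl⟩
      exact (IH j hj).2.1
    have h𝒱card : #↥𝒱 ≤ Cardinal.continuum := le_trans Cardinal.mk_image_le (Iot_Iio_le i)
    have hnc : ¬ Y ⊆ ⋃₀ 𝒱 := hcon 𝒱 h𝒱sub h𝒱card
    rw [not_subset] at hnc
    obtain ⟨z, hzY, hz𝒱⟩ := hnc
    obtain ⟨U, hU𝒰, hzU⟩ := hcov hzY
    have hex : ∃ w : X × Set X, w.1 ∈ Y ∧ w.2 ∈ 𝒰 ∧ w.1 ∈ w.2 ∧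
        (∀ j (hj : j < i), w.1 ∉ (q j).2) := by
      refine ⟨(z, U), hzY, hU𝒰, hzU, fun j hj hmem => ?_⟩
      exact hz𝒱 ⟨(q j).2, ⟨j, hj, rfl⟩, hmem⟩
    have hqieq : q i = Classical.choose hex := by
      rw [hqfix i, hstep]
      simp only []
      rw [dif_pos hex]
    obtain ⟨hc1, hc2, hc3, hc4⟩ := Classical.choose_spec hex
    rw [hqieq]
    exact ⟨hc1, hc2, hc3, fun j hj => hc4 j hj⟩
  -- this is a right-separated sequence: contradiction with lemmaB
  exact lemmaB h (fun i => (q i).1) (fun i => (q i).2)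
    (fun i => hopen _ (key i).2.1) (fun i => (key i).2.2.1)
    (fun i j hij => (key j).2.2.2 i hij)

/-! ### Part 2 : de Groot ramification -/

def HasPair {Z : Type*} (F : Set Z) : Prop := ∃ pr : Z × Z, pr.1 ∈ F ∧ pr.2 ∈ F ∧ pr.1 ≠ pr.2

section Part2

attribute [local instance] Classical.propDecidable

variable [Nonempty X]

noncomputable def pick (F : Set X) : X × X :=
  if h : HasPair F then h.choose else (Classical.arbitrary X, Classical.arbitrary X)

lemma pick_spec {F : Set X} (h : HasPair F) :
    (pick F).1 ∈ F ∧ (pick F).2 ∈ F ∧ (pick F).1 ≠ (pick F).2 := by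
  rw [pick, dif_pos h]
  exact h.choose_spec

lemma sel_exists (F : Set X) : ∃ UV : Set X × Set X, IsOpen UV.1 ∧ IsOpen UV.2 ∧
    Disjoint UV.1 UV.2 ∧ (HasPair F → (pick F).1 ∈ UV.1 ∧ (pick F).2 ∈ UV.2) := by
  by_cases h : HasPair F
  · obtain ⟨U, V, hU, hV, h1, h2, hd⟩ := t2_separation (pick_spec h).2.2
    exact ⟨(U, V), hU, hV, hd, fun _ => ⟨h1, h2⟩⟩
  · exact ⟨(∅, ∅), isOpen_empty, isOpen_empty, by simp, fun hc => absurd hc h⟩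

noncomputable def selU (F : Set X) : Set X := (sel_exists F).choose.1
noncomputable def selV (F : Set X) : Set X := (sel_exists F).choose.2

lemma selU_open (F : Set X) : IsOpen (selU F) := (sel_exists F).choose_spec.1
lemma selV_open (F : Set X) : IsOpen (selV F) := (sel_exists F).choose_spec.2.1
lemma sel_disjoint (F : Set X) : Disjoint (selU F) (selV F) :=
  (sel_exists F).choose_spec.2.2.1
lemma sel_mem {F : Set X} (h : HasPair F) :
    (pick F).1 ∈ selU F ∧ (pick F).2 ∈ selV F :=
  (sel_exists F).choose_spec.2.2.2 h

/-- the ramification tree: the "node" of `x` at level `o`. -/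
noncomputable def NN : Ordinal.{u} → X → Set X := fun o =>
  Ordinal.limitRecOn o (fun _ => (univ : Set X))
    (fun _ ih x => if x ∈ selU (ih x) then ih x \ selV (ih x) else ih x \ selU (ih x))
    (fun o _ ih x => ⋂ (o' : Ordinal.{u}) (h : o' < o), ih o' h x)

lemma NN_zero (x : X) : NN 0 x = Set.univ := by
  rw [NN, Ordinal.limitRecOn_zero]

lemma NN_succ (o : Ordinal.{u}) (x : X) :
    NN (Order.succ o) x = if x ∈ selU (NN o x) then NN o x \ selV (NN o x)
      else NN o x \ selU (NN o x) := by
  rw [NN, Ordinal.limitRecOn_succ]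
  rfl

lemma NN_limit {o : Ordinal.{u}} (ho : Order.IsSuccLimit o) (x : X) :
    NN o x = ⋂ (o' : Ordinal.{u}) (h : o' < o), NN o' x := by
  rw [NN, Ordinal.limitRecOn_limit _ _ _ _ ho]
  rfl

lemma mem_NN (o : Ordinal.{u}) (x : X) : x ∈ NN o x := by
  induction o using Ordinal.induction with
  | _ o IH =>
    rcases Ordinal.zero_or_succ_or_isSuccLimit o with h0 | ⟨a, ha⟩ | hl
    · rw [h0, NN_zero]; trivial
    · subst ha
      rw [NN_succ]
      have hx := IH a (Order.lt_succ a)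
      by_cases hb : x ∈ selU (NN a x)
      · rw [if_pos hb]
        exact ⟨hx, fun hv => (sel_disjoint (NN a x)).ne_of_mem hb hv rfl⟩
      · rw [if_neg hb]
        exact ⟨hx, hb⟩
    · rw [NN_limit hl]
      exact mem_iInter.2 fun o' => mem_iInter.2 fun h => IH o' h

lemma NN_mono {o o' : Ordinal.{u}} (x : X) (h : o' ≤ o) : NN o x ⊆ NN o' x := by
  induction o using Ordinal.induction with
  | _ o IH =>
    rcases eq_or_lt_of_le h with rfl | hlt
    · exact subset_rfl
    rcases Ordinal.zero_or_succ_or_isSuccLimit o with h0 | ⟨a, ha⟩ | hl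
    · exact absurd hlt (by simp [h0])
    · subst ha
      have h1 : NN (Order.succ a) x ⊆ NN a x := by
        rw [NN_succ]
        by_cases hb : x ∈ selU (NN a x)
        · rw [if_pos hb]; exact diff_subset
        · rw [if_neg hb]; exact diff_subset
      exact h1.trans (IH a (Order.lt_succ a) (Order.lt_succ_iff.1 hlt))
    · rw [NN_limit hl]
      exact iInter_subset_of_subset o' (iInter_subset_of_subset hlt subset_rfl)

lemma NN_bits {o : Ordinal.{u}} {x y : X}
    (hb : ∀ o' < o, ((x ∈ selU (NN o' x)) ↔ (y ∈ selU (NN o' y)))) : NN o x = NN o y := by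
  induction o using Ordinal.induction with
  | _ o IH =>
    rcases Ordinal.zero_or_succ_or_isSuccLimit o with h0 | ⟨a, ha⟩ | hl
    · rw [h0, NN_zero, NN_zero]
    · subst ha
      have hF : NN a x = NN a y :=
        IH a (Order.lt_succ a) (fun o' ho' => hb o' (ho'.trans (Order.lt_succ a)))
      have hbit := hb a (Order.lt_succ a)
      rw [NN_succ, NN_succ, ← hF]
      by_cases hx : x ∈ selU (NN a x)
      · rw [if_pos hx, if_pos (by rw [← hF] at hbit; exact hbit.1 hx)]
      · rw [if_neg hx, if_neg (by rw [← hF] at hbit; exact fun hy => hx (hbit.2 hy))]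
    · rw [NN_limit hl, NN_limit hl]
      exact iInter_congr fun o' => iInter_congr fun ho' =>
        IH o' ho' (fun o'' ho'' => hb o'' (ho''.trans ho'))

lemma NN_terminates (h : DiscretelyLindelof ↥(codiag X)) (x : X) :
    ∃ o : Ordinal.{u}, o < (Order.succ Cardinal.continuum.{u}).ord ∧ ¬ HasPair (NN o x) := by
  by_contra hcon
  push_neg at hcon
  set Λ := (Order.succ Cardinal.continuum.{u}).ord with hΛ
  set iso := Ordinal.ToType.mk (o := Λ) with hiso
  set α : Iot.{u} → Ordinal.{u} := fun i => (iso.symm i).1 with hα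
  have hHP : ∀ i : Iot.{u}, HasPair (NN (α i) x) := fun i => hcon (α i) (iso.symm i).2
  set p : Iot.{u} → X := fun i =>
    if x ∈ selU (NN (α i) x) then (pick (NN (α i) x)).2 else (pick (NN (α i) x)).1 with hp
  set O : Iot.{u} → Set X := fun i =>
    if x ∈ selU (NN (α i) x) then selV (NN (α i) x) else selU (NN (α i) x) with hO
  have hOopen : ∀ i, IsOpen (O i) := by
    intro i
    by_cases hbx : x ∈ selU (NN (α i) x)
    · simp only [hO, if_pos hbx]; exact selV_open _
    · simp only [hO, if_neg hbx]; exact selU_open _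
  have hpO : ∀ i, p i ∈ O i := by
    intro i
    by_cases hbx : x ∈ selU (NN (α i) x)
    · simp only [hp, hO, if_pos hbx]; exact (sel_mem (hHP i)).2
    · simp only [hp, hO, if_neg hbx]; exact (sel_mem (hHP i)).1
  have hpN : ∀ i, p i ∈ NN (α i) x := by
    intro i
    by_cases hbx : x ∈ selU (NN (α i) x)
    · simp only [hp, if_pos hbx]; exact (pick_spec (hHP i)).2.1
    · simp only [hp, if_neg hbx]; exact (pick_spec (hHP i)).1
  have hrs : ∀ i j, i < j → p j ∉ O i := by
    intro i j hij
    have hαij : α i < α j := by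
      have : iso.symm i < iso.symm j := iso.symm.lt_iff_lt.2 hij
      exact this
    have hsucc : Order.succ (α i) ≤ α j := Order.succ_le_of_lt hαij
    have hmem : p j ∈ NN (Order.succ (α i)) x := NN_mono x hsucc (hpN j)
    rw [NN_succ] at hmem
    by_cases hbx : x ∈ selU (NN (α i) x)
    · rw [if_pos hbx] at hmem
      simp only [hO, if_pos hbx]
      exact hmem.2
    · rw [if_neg hbx] at hmem
      simp only [hO, if_neg hbx]
      exact hmem.2
  exact lemmaB h p O hOopen hpO hrs

lemma part2 (h : DiscretelyLindelof ↥(codiag X)) : #X ≤ 2 ^ Cardinal.continuum.{u} := by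
  classical
  haveI : Nonempty (Iot.{u}) := Iot_nonempty
  set Λ := (Order.succ Cardinal.continuum.{u}).ord with hΛ
  set iso := Ordinal.ToType.mk (o := Λ) with hiso
  choose m hmΛ hmNP using NN_terminates (X := X) h
  set mi : X → Iot.{u} := fun x => iso ⟨m x, hmΛ x⟩ with hmi
  set fib : Iot.{u} → Set X := fun i => {x | mi x = i} with hfib
  have hfibcard : ∀ i, #(fib i) ≤ 2 ^ Cardinal.continuum.{u} := by
    intro i
    have hinj : Function.Injective (fun x : ↥(fib i) =>
        {j : ↥(Iio i) | (x : X) ∈ selU (NN ((iso.symm j.1).1) (x : X))}) := by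
      rintro ⟨x, hx⟩ ⟨y, hy⟩ hxy
      have hx' : mi x = i := hx
      have hy' : mi y = i := hy
      have hmxy : m x = m y := by
        have h1 : iso ⟨m x, hmΛ x⟩ = iso ⟨m y, hmΛ y⟩ := hx'.trans hy'.symm
        have h2 := iso.injective h1
        exact Subtype.ext_iff.1 h2
      simp only [Set.ext_iff, mem_setOf_eq] at hxy
      have hbits : ∀ o' < m x, ((x ∈ selU (NN o' x)) ↔ (y ∈ selU (NN o' y))) := by
        intro o' ho'
        have ho'Λ : o' < Λ := ho'.trans (hmΛ x)
        have hji : iso ⟨o', ho'Λ⟩ < i := by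
          rw [← hx']
          exact iso.lt_iff_lt.2 (Subtype.mk_lt_mk.2 ho')
        have h3 := hxy ⟨iso ⟨o', ho'Λ⟩, hji⟩
        simpa using h3
      have hNxy : NN (m x) x = NN (m x) y := NN_bits hbits
      have hxm : x ∈ NN (m x) x := mem_NN _ _
      have hym : y ∈ NN (m x) x := by
        rw [hNxy, hmxy]
        exact mem_NN _ _
      have hxyeq : x = y := by
        by_contra hne
        exact hmNP x ⟨(x, y), hxm, hym, hne⟩
      exact Subtype.ext hxyeq
    calc #(fib i) ≤ #(Set ↥(Iio i)) := Cardinal.mk_le_of_injective hinj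
      _ = 2 ^ #(Iio i) := Cardinal.mk_set
      _ ≤ 2 ^ Cardinal.continuum.{u} :=
          Cardinal.power_le_power_left (by norm_num) (Iot_Iio_le i)
  have hcover : (Set.univ : Set X) = ⋃ i, fib i := by
    ext x
    simp only [mem_univ, mem_iUnion, true_iff]
    exact ⟨mi x, rfl⟩
  calc #X = #(Set.univ : Set X) := Cardinal.mk_univ.symm
    _ = #(⋃ i, fib i) := by rw [hcover]
    _ ≤ #(Iot.{u}) * ⨆ i, #(fib i) := Cardinal.mk_iUnion_le _
    _ ≤ (2 ^ Cardinal.continuum.{u}) * (2 ^ Cardinal.continuum.{u}) := by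
        refine mul_le_mul' ?_ (ciSup_le hfibcard)
        rw [Iot_mk]
        exact Order.succ_le_of_lt (Cardinal.cantor _)
    _ = 2 ^ Cardinal.continuum.{u} :=
        Cardinal.mul_eq_self (le_trans Cardinal.aleph0_le_continuum (Cardinal.cantor _).le)

end Part2

/-- If `X` is Hausdorff and its co-diagonal is discretely Lindelöf, then the
hereditary Lindelöf number of `X` is at most `𝔠` and `|X| ≤ 2 ^ 𝔠`. -/
theorem codiag_discretelyLindelof_hl_le_continuum
    (X : Type u) [TopologicalSpace X] [T2Space X]
    (h : DiscretelyLindelof ↥(codiag X)) :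
    (∀ (Y : Set X) (𝒰 : Set (Set X)), (∀ U ∈ 𝒰, IsOpen U) → Y ⊆ ⋃₀ 𝒰 →
      ∃ 𝒱 ⊆ 𝒰, #↥𝒱 ≤ Cardinal.continuum ∧ Y ⊆ ⋃₀ 𝒱) ∧
    #X ≤ 2 ^ Cardinal.continuum := by
  constructor
  · intro Y 𝒰 hopen hcov
    exact part1 h Y 𝒰 hopen hcov
  · rcases isEmpty_or_nonempty X with hE | hNE
    · have : #X = 0 := Cardinal.mk_eq_zero X
      rw [this]
      exact zero_le
    · exact part2 h
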